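/- arXiv:2201.12081 — 2 statements merged into one kernel-verified Lean document; each statement's English description precedes it below -/
import Mathlib

section
/- Let F : (1,∞) → ℝ³ be differentiable and suppose F'(λ) = −λ⁻¹ F(λ) + r(λ) + h(λ) for all λ > 1, where r, h : (1,∞) → ℝ³ are measurable, λ·|r(λ)| → 0 as λ → ∞, and ∫₁^∞ |h(λ)| dλ < ∞. Then F(λ) → 0 as λ → ∞. (This is the integration step concluding the proof of Lemma E.1 of the paper.) -/
open MeasureTheory Filter

noncomputable section

abbrev E3 : Type := EuclideanSpace ℝ (Fin 3)

/-- Cesàro-type helper: if `g ≥ 0` is interval integrable from `a` and its tail integrals are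
eventually at most `ε * b`, then the averages `b⁻¹ * ∫_a^b g` tend to `0`. -/
lemma cesaro_aux (a : ℝ) (ha : 0 < a) (g : ℝ → ℝ)
    (hg0 : ∀ s, a ≤ s → 0 ≤ g s)
    (hgi : ∀ c b : ℝ, a ≤ c → c ≤ b → IntervalIntegrable g volume c b)
    (hsmall : ∀ ε : ℝ, 0 < ε → ∃ M, a ≤ M ∧ ∀ b, M ≤ b → (∫ s in M..b, g s) ≤ ε * b) :
    Tendsto (fun b => b⁻¹ * ∫ s in a..b, g s) atTop (nhds 0) := by
  rw [NormedAddCommGroup.tendsto_nhds_zero]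
  intro ε hε
  obtain ⟨M, haM, hM⟩ := hsmall (ε / 2) (by positivity)
  set C : ℝ := ∫ s in a..M, g s with hC
  have hC0 : 0 ≤ C := intervalIntegral.integral_nonneg haM (fun s hs => hg0 s hs.1)
  have hM0 : 0 < M := lt_of_lt_of_le ha haM
  filter_upwards [eventually_ge_atTop (max M (2 * C / ε + 1))] with b hb
  have hbM : M ≤ b := le_trans (le_max_left _ _) hb
  have hbC : 2 * C / ε + 1 ≤ b := le_trans (le_max_right _ _) hb
  have hb0 : 0 < b := lt_of_lt_of_le hM0 hbM
  have hab : a ≤ b := le_trans haM hbM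
  have hsplit : (∫ s in a..b, g s) = C + ∫ s in M..b, g s := by
    rw [hC, intervalIntegral.integral_add_adjacent_intervals (hgi a M le_rfl haM)
      (hgi M b haM hbM)]
  have hIle : (∫ s in a..b, g s) ≤ C + ε / 2 * b := by
    rw [hsplit]
    have := hM b hbM
    linarith
  have hInn : 0 ≤ ∫ s in a..b, g s :=
    intervalIntegral.integral_nonneg hab (fun s hs => hg0 s hs.1)
  have : ‖b⁻¹ * ∫ s in a..b, g s‖ = b⁻¹ * ∫ s in a..b, g s := by
    rw [Real.norm_eq_abs, abs_of_nonneg]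
    positivity
  rw [this]
  have hCb : C / b < ε / 2 := by
    rw [div_lt_iff₀ hb0]
    have h1 : ε * (2 * C / ε + 1) ≤ ε * b := mul_le_mul_of_nonneg_left hbC hε.le
    have h2 : ε * (2 * C / ε) = 2 * C := by field_simp
    nlinarith
  calc b⁻¹ * ∫ s in a..b, g s ≤ b⁻¹ * (C + ε / 2 * b) := by
        apply mul_le_mul_of_nonneg_left hIle (by positivity)
    _ = C / b + ε / 2 * (b * b⁻¹) := by ring
    _ = C / b + ε / 2 := by rw [mul_inv_cancel₀ hb0.ne']; ring
    _ < ε := by linarith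

/-- ODE integration step concluding the proof of Lemma E.1: if `F : (1,∞) → ℝ³` satisfies
`F' = −λ⁻¹ F + r + h` with `λ|r(λ)| → 0` and `∫₁^∞ |h| < ∞`, then `F(λ) → 0` as `λ → ∞`. -/
theorem ode_integration_step
    (F r h : ℝ → E3)
    (hr_meas : Measurable r) (hh_meas : Measurable h)
    (hF : ∀ lam : ℝ, 1 < lam →
      HasDerivAt F (-lam⁻¹ • F lam + r lam + h lam) lam)
    (hr : Tendsto (fun lam : ℝ => lam * ‖r lam‖) atTop (nhds 0))
    (hh : IntegrableOn (fun lam : ℝ => ‖h lam‖) (Set.Ioi (1 : ℝ))) :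
    Tendsto F atTop (nhds (0 : E3)) := by
  -- choose a base point `a ≥ 2` with `s * ‖r s‖ ≤ 1` for `s ≥ a`
  obtain ⟨a₀, ha₀⟩ := (hr.eventually (eventually_le_nhds (by norm_num : (0:ℝ) < 1))).exists_forall_of_atTop
  set a : ℝ := max 2 a₀ with ha_def
  have ha2 : (2:ℝ) ≤ a := le_max_left _ _
  have ha1 : (1:ℝ) < a := by linarith
  have ha0 : (0:ℝ) < a := by linarith
  have har : ∀ s, a ≤ s → s * ‖r s‖ ≤ 1 := fun s hs => ha₀ s ((le_max_right _ _).trans hs)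
  -- measurability facts
  have hmr : Measurable fun s : ℝ => s * ‖r s‖ := measurable_id.mul hr_meas.norm
  have hmh : Measurable fun s : ℝ => s * ‖h s‖ := measurable_id.mul hh_meas.norm
  have hmrh : Measurable fun s : ℝ => s • (r s + h s) :=
    measurable_id.smul (hr_meas.add hh_meas)
  -- integrability of `‖h‖` on subintervals
  have hha : IntegrableOn (fun s : ℝ => ‖h s‖) (Set.Ioi a) :=
    hh.mono_set (Set.Ioi_subset_Ioi (by linarith))
  have hihn : ∀ c b : ℝ, a ≤ c → c ≤ b → IntervalIntegrable (fun s : ℝ => ‖h s‖) volume c b := by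
    intro c b hac hcb
    rw [intervalIntegrable_iff_integrableOn_Ioc_of_le hcb]
    exact hha.mono_set fun x hx => lt_of_le_of_lt hac hx.1
  -- integrability of `s * ‖h s‖` on subintervals [c, b] with a ≤ c ≤ b
  have hih : ∀ c b : ℝ, a ≤ c → c ≤ b → IntervalIntegrable (fun s : ℝ => s * ‖h s‖) volume c b := by
    intro c b hac hcb
    rw [intervalIntegrable_iff_integrableOn_Ioc_of_le hcb]
    refine Integrable.mono' ((hihn c b hac hcb).1.const_mul b)
      (hmh.aestronglyMeasurable.restrict) ?_
    rw [ae_restrict_iff' measurableSet_Ioc]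
    refine Eventually.of_forall fun s hs => ?_
    have hs0 : 0 < s := lt_of_lt_of_le (lt_of_lt_of_le ha0 hac) hs.1.le
    rw [Real.norm_eq_abs, abs_of_nonneg (by positivity)]
    exact mul_le_mul_of_nonneg_right hs.2 (norm_nonneg _)
  -- integrability of `s * ‖r s‖` on subintervals
  have hir : ∀ c b : ℝ, a ≤ c → c ≤ b → IntervalIntegrable (fun s : ℝ => s * ‖r s‖) volume c b := by
    intro c b hac hcb
    rw [intervalIntegrable_iff_integrableOn_Ioc_of_le hcb]
    refine Measure.integrableOn_of_bounded (M := 1) measure_Ioc_lt_top.ne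
      hmr.aestronglyMeasurable ?_
    rw [ae_restrict_iff' measurableSet_Ioc]
    refine Eventually.of_forall fun s hs => ?_
    have has : a ≤ s := hac.trans hs.1.le
    have hs0 : 0 < s := lt_of_lt_of_le ha0 has
    rw [Real.norm_eq_abs, abs_of_nonneg (by positivity)]
    exact har s has
  -- integrability of the integrand
  have hirh : ∀ c b : ℝ, a ≤ c → c ≤ b →
      IntervalIntegrable (fun s : ℝ => s • (r s + h s)) volume c b := by
    intro c b hac hcb
    rw [intervalIntegrable_iff_integrableOn_Ioc_of_le hcb]
    have hg : IntegrableOn (fun s : ℝ => 1 + b * ‖h s‖) (Set.Ioc c b) := by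
      refine (integrableOn_const measure_Ioc_lt_top.ne).add ?_
      exact (hihn c b hac hcb).1.const_mul b
    refine Integrable.mono' hg hmrh.aestronglyMeasurable.restrict ?_
    rw [ae_restrict_iff' measurableSet_Ioc]
    refine Eventually.of_forall fun s hs => ?_
    have has : a ≤ s := hac.trans hs.1.le
    have hs0 : 0 < s := lt_of_lt_of_le ha0 has
    have h1 : ‖s • (r s + h s)‖ ≤ s * ‖r s‖ + s * ‖h s‖ := by
      rw [norm_smul, Real.norm_eq_abs, abs_of_nonneg hs0.le]
      calc s * ‖r s + h s‖ ≤ s * (‖r s‖ + ‖h s‖) :=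
            mul_le_mul_of_nonneg_left (norm_add_le _ _) hs0.le
        _ = s * ‖r s‖ + s * ‖h s‖ := by ring
    have h2 : s * ‖h s‖ ≤ b * ‖h s‖ :=
      mul_le_mul_of_nonneg_right hs.2 (norm_nonneg _)
    have h3 := har s has
    linarith
  -- fundamental theorem of calculus
  have key : ∀ b, a ≤ b → (b • F b) = (a • F a) + ∫ s in a..b, s • (r s + h s) := by
    intro b hab
    have hderiv : ∀ s ∈ Set.uIcc a b,
        HasDerivAt (fun x : ℝ => x • F x) (s • (r s + h s)) s := by
      intro s hs
      rw [Set.uIcc_of_le hab] at hs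
      have hs1 : 1 < s := lt_of_lt_of_le ha1 hs.1
      have hs0 : s ≠ 0 := by linarith
      have hd := (hasDerivAt_id s).smul (hF s hs1)
      refine hd.congr_deriv ?_
      simp only [id_eq, one_smul, smul_add, smul_smul, mul_neg, mul_inv_cancel₀ hs0]
      module
    have hft := intervalIntegral.integral_eq_sub_of_hasDerivAt hderiv (hirh a b le_rfl hab)
    rw [hft]
    abel
  have hFval : ∀ b, a ≤ b →
      F b = b⁻¹ • ((a • F a) + ∫ s in a..b, s • (r s + h s)) := by
    intro b hab
    have hb0 : b ≠ 0 := (lt_of_lt_of_le ha0 hab).ne'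
    rw [← key b hab, smul_smul, inv_mul_cancel₀ hb0, one_smul]
  -- norm bound
  have hbound : ∀ b, a ≤ b →
      ‖F b‖ ≤ b⁻¹ * ‖a • F a‖ + (b⁻¹ * ∫ s in a..b, s * ‖r s‖)
        + (b⁻¹ * ∫ s in a..b, s * ‖h s‖) := by
    intro b hab
    have hb0 : 0 < b := lt_of_lt_of_le ha0 hab
    rw [hFval b hab, norm_smul, Real.norm_eq_abs, abs_of_nonneg (by positivity : (0:ℝ) ≤ b⁻¹)]
    have h2 : ‖(a • F a) + ∫ s in a..b, s • (r s + h s)‖ ≤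
        ‖a • F a‖ + ((∫ s in a..b, s * ‖r s‖) + ∫ s in a..b, s * ‖h s‖) := by
      refine (norm_add_le _ _).trans (add_le_add le_rfl ?_)
      calc ‖∫ s in a..b, s • (r s + h s)‖ ≤ ∫ s in a..b, ‖s • (r s + h s)‖ :=
            intervalIntegral.norm_integral_le_integral_norm hab
        _ ≤ ∫ s in a..b, (s * ‖r s‖ + s * ‖h s‖) := by
            refine intervalIntegral.integral_mono_on hab (hirh a b le_rfl hab).norm
              ((hir a b le_rfl hab).add (hih a b le_rfl hab)) fun s hs => ?_
            have hs0 : 0 < s := lt_of_lt_of_le ha0 hs.1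
            rw [norm_smul, Real.norm_eq_abs, abs_of_nonneg hs0.le]
            calc s * ‖r s + h s‖ ≤ s * (‖r s‖ + ‖h s‖) :=
                  mul_le_mul_of_nonneg_left (norm_add_le _ _) hs0.le
              _ = s * ‖r s‖ + s * ‖h s‖ := by ring
        _ = (∫ s in a..b, s * ‖r s‖) + ∫ s in a..b, s * ‖h s‖ :=
            intervalIntegral.integral_add (hir a b le_rfl hab) (hih a b le_rfl hab)
    calc b⁻¹ * ‖(a • F a) + ∫ s in a..b, s • (r s + h s)‖
        ≤ b⁻¹ * (‖a • F a‖ + ((∫ s in a..b, s * ‖r s‖) + ∫ s in a..b, s * ‖h s‖)) :=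
          mul_le_mul_of_nonneg_left h2 (by positivity)
      _ = _ := by ring
  -- the three limits
  have T1 : Tendsto (fun b : ℝ => b⁻¹ * ‖a • F a‖) atTop (nhds 0) := by
    simpa using tendsto_inv_atTop_zero.mul_const ‖a • F a‖
  have T2 : Tendsto (fun b : ℝ => b⁻¹ * ∫ s in a..b, s * ‖r s‖) atTop (nhds 0) := by
    refine cesaro_aux a ha0 _ (fun s hs => ?_) hir ?_
    · have : 0 < s := lt_of_lt_of_le ha0 hs
      positivity
    · intro ε hε
      obtain ⟨M₀, hM₀⟩ := (hr.eventually (eventually_le_nhds hε)).exists_forall_of_atTop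
      refine ⟨max a M₀, le_max_left _ _, fun b hb => ?_⟩
      set M := max a M₀ with hM_def
      have haM : a ≤ M := le_max_left _ _
      have hM0 : 0 < M := lt_of_lt_of_le ha0 haM
      calc (∫ s in M..b, s * ‖r s‖) ≤ ∫ _ in M..b, ε := by
            refine intervalIntegral.integral_mono_on hb (hir M b haM hb)
              intervalIntegrable_const fun s hs => ?_
            exact hM₀ s ((le_max_right _ _).trans hs.1)
        _ = (b - M) * ε := by simp [mul_comm]
        _ ≤ ε * b := by nlinarith
  have T3 : Tendsto (fun b : ℝ => b⁻¹ * ∫ s in a..b, s * ‖h s‖) atTop (nhds 0) := by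
    refine cesaro_aux a ha0 _ (fun s hs => ?_) hih ?_
    · have : 0 < s := lt_of_lt_of_le ha0 hs
      positivity
    · intro ε hε
      set I : ℝ := ∫ x in Set.Ioi a, ‖h x‖ with hI
      have htend : Tendsto (fun M : ℝ => ∫ x in a..M, ‖h x‖) atTop (nhds I) :=
        intervalIntegral_tendsto_integral_Ioi a hha tendsto_id
      obtain ⟨M, hMtail, haM⟩ := ((htend.eventually
        (eventually_gt_nhds (by linarith : I - ε < I))).and (eventually_ge_atTop a)).exists
      refine ⟨M, haM, fun b hb => ?_⟩
      have hb0 : 0 < b := lt_of_lt_of_le (lt_of_lt_of_le ha0 haM) hb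
      have habb : a ≤ b := haM.trans hb
      -- the tail integral of ‖h‖ is at most ε
      have htail : (∫ s in M..b, ‖h s‖) ≤ ε := by
        have hsplit : (∫ s in a..M, ‖h s‖) + (∫ s in M..b, ‖h s‖) = ∫ s in a..b, ‖h s‖ :=
          intervalIntegral.integral_add_adjacent_intervals (hihn a M le_rfl haM)
            (hihn M b haM hb)
        have hle : (∫ s in a..b, ‖h s‖) ≤ I := by
          rw [intervalIntegral.integral_of_le habb, hI]
          refine setIntegral_mono_set hha ?_ (HasSubset.Subset.eventuallyLE Set.Ioc_subset_Ioi_self)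
          exact Eventually.of_forall fun x => norm_nonneg _
        linarith
      calc (∫ s in M..b, s * ‖h s‖) ≤ ∫ s in M..b, b * ‖h s‖ := by
            refine intervalIntegral.integral_mono_on hb (hih M b haM hb)
              ((hihn M b haM hb).const_mul b) fun s hs => ?_
            exact mul_le_mul_of_nonneg_right hs.2 (norm_nonneg _)
        _ = b * ∫ s in M..b, ‖h s‖ := intervalIntegral.integral_const_mul _ _
        _ ≤ b * ε := mul_le_mul_of_nonneg_left htail hb0.le
        _ = ε * b := mul_comm _ _
  -- conclusion by squeezing
  rw [tendsto_zero_iff_norm_tendsto_zero]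
  refine squeeze_zero' (Eventually.of_forall fun b => norm_nonneg _)
    (eventually_atTop.2 ⟨a, hbound⟩) ?_
  have := (T1.add T2).add T3
  simpa using this
end
end

section
/- Let τ ∈ (1/2, 1] and let σ be a C² field of symmetric 3×3 matrices on {x ∈ ℝ³ : |x| > 1/2} such that |∂_J σ(x)| ≤ C |x|^{−τ−|J|} for every multi-index J with |J| ≤ 2 and some constant C > 0. Let g(x) = Id + σ(x), which is positive definite for |x| sufficiently large, and let R[g] denote the scalar curvature of g computed in coordinates (see context). Then there is a constant C' > 0 such that, for all sufficiently large |x|, | R[g](x) − (div div σ − Δ(tr σ))(x) | ≤ C' |x|^{−2−2τ}. -/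
open MeasureTheory
open scoped RealInnerProductSpace

noncomputable section

/-- The exterior region `{x ∈ ℝ³ : |x| > 1/2}`. -/
def extRegion : Set E3 := {x : E3 | 1 / 2 < ‖x‖}

/-- The `i`-th standard basis vector of `ℝ³`. -/
def ev (i : Fin 3) : E3 := EuclideanSpace.single i 1

/-- Euclidean partial derivative `∂ᵢ f`. -/
def pd (f : E3 → ℝ) (i : Fin 3) (x : E3) : ℝ := fderiv ℝ f x (ev i)

/-- Pointwise trace `tr σ`. -/
def trS (σ : E3 → Matrix (Fin 3) (Fin 3) ℝ) (x : E3) : ℝ := (σ x).trace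

/-- `j`-th component of `div σ`, i.e. `Σᵢ ∂ᵢ σᵢⱼ`. -/
def divS (σ : E3 → Matrix (Fin 3) (Fin 3) ℝ) (j : Fin 3) (x : E3) : ℝ :=
  ∑ i, pd (fun y => σ y i j) i x

/-- `div div σ = Σᵢⱼ ∂ᵢ∂ⱼ σᵢⱼ`. -/
def divdivS (σ : E3 → Matrix (Fin 3) (Fin 3) ℝ) (x : E3) : ℝ :=
  ∑ j, pd (divS σ j) j x

/-- Euclidean Laplacian. -/
def lap (f : E3 → ℝ) (x : E3) : ℝ := ∑ i, pd (pd f i) i x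

/-- The metric `g = Id + σ` as a matrix field. -/
def gmat (σ : E3 → Matrix (Fin 3) (Fin 3) ℝ) (x : E3) : Matrix (Fin 3) (Fin 3) ℝ :=
  1 + σ x

/-- Christoffel symbols `Γ^k_{ij}` of `g = Id + σ` in coordinates. -/
def Gam (σ : E3 → Matrix (Fin 3) (Fin 3) ℝ) (k i j : Fin 3) (x : E3) : ℝ :=
  (1 / 2) * ∑ l, (gmat σ x)⁻¹ k l *
    (pd (fun y => gmat σ y j l) i x + pd (fun y => gmat σ y i l) j x
      - pd (fun y => gmat σ y i j) l x)

/-- Ricci curvature `Ric_{ij}` of `g = Id + σ` in coordinates. -/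
def Ricci (σ : E3 → Matrix (Fin 3) (Fin 3) ℝ) (i j : Fin 3) (x : E3) : ℝ :=
  (∑ k, (pd (fun y => Gam σ k i j y) k x - pd (fun y => Gam σ k k j y) i x))
    + ∑ k, ∑ l, (Gam σ k k l x * Gam σ l i j x - Gam σ k i l x * Gam σ l k j x)

/-- Scalar curvature `R[g] = Σᵢⱼ g^{ij} Ric_{ij}` of `g = Id + σ`. -/
def scalCurv (σ : E3 → Matrix (Fin 3) (Fin 3) ℝ) (x : E3) : ℝ :=
  ∑ i, ∑ j, (gmat σ x)⁻¹ i j * Ricci σ i j x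


section AuxLemmas

open Filter Topology

lemma isOpen_extRegion : IsOpen extRegion := isOpen_lt continuous_const continuous_norm

lemma norm_ev (i : Fin 3) : ‖ev i‖ = 1 := by simp [ev]

variable {f g : E3 → ℝ} {x : E3} {i j : Fin 3}

lemma pd_congr_nhds (h : f =ᶠ[𝓝 x] g) : pd f i x = pd g i x := by
  unfold pd; rw [h.fderiv_eq]

lemma pd_congr_open {s : Set E3} (hs : IsOpen s) (hx : x ∈ s) (h : ∀ y ∈ s, f y = g y) :
    pd f i x = pd g i x :=
  pd_congr_nhds (Filter.eventuallyEq_of_mem (hs.mem_nhds hx) h)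

lemma pd_add (hf : DifferentiableAt ℝ f x) (hg : DifferentiableAt ℝ g x) :
    pd (fun y => f y + g y) i x = pd f i x + pd g i x := by
  unfold pd; rw [fderiv_fun_add hf hg]; rfl

lemma pd_sub (hf : DifferentiableAt ℝ f x) (hg : DifferentiableAt ℝ g x) :
    pd (fun y => f y - g y) i x = pd f i x - pd g i x := by
  unfold pd; rw [fderiv_fun_sub hf hg]; rfl

lemma pd_mul (hf : DifferentiableAt ℝ f x) (hg : DifferentiableAt ℝ g x) :
    pd (fun y => f y * g y) i x = f x * pd g i x + g x * pd f i x := by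
  unfold pd; rw [fderiv_fun_mul hf hg]; simp

lemma pd_const (c : ℝ) : pd (fun _ => c) i x = 0 := by
  unfold pd; rw [fderiv_fun_const]; simp

lemma pd_const_add (c : ℝ) : pd (fun y => c + f y) i x = pd f i x := by
  unfold pd; rw [fderiv_const_add]

lemma pd_const_sub (c : ℝ) : pd (fun y => c - f y) i x = - pd f i x := by
  unfold pd; rw [fderiv_const_sub]; simp

lemma pd_const_mul (c : ℝ) (hf : DifferentiableAt ℝ f x) :
    pd (fun y => c * f y) i x = c * pd f i x := by
  unfold pd; rw [fderiv_const_mul hf]; simp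

lemma pd_sum {κ : Type*} (s : Finset κ) (F : κ → E3 → ℝ)
    (hF : ∀ k ∈ s, DifferentiableAt ℝ (F k) x) :
    pd (fun y => ∑ k ∈ s, F k y) i x = ∑ k ∈ s, pd (F k) i x := by
  unfold pd; rw [fderiv_fun_sum hF]; simp

section Aux2

variable {f : E3 → ℝ} {x : E3} {i j : Fin 3}

lemma pd_eventuallyEq (hx : x ∈ extRegion) :
    pd f i =ᶠ[𝓝 x] fun y => fderivWithin ℝ f extRegion y (ev i) := by
  filter_upwards [isOpen_extRegion.mem_nhds hx] with y hy
  unfold pd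
  rw [fderivWithin_of_isOpen isOpen_extRegion hy]

lemma diffAt_fderivWithin_apply (hf : ContDiffOn ℝ 2 f extRegion) (hx : x ∈ extRegion) :
    DifferentiableAt ℝ (fun y => fderivWithin ℝ f extRegion y (ev i)) x := by
  have h1 : ContDiffOn ℝ 1 (fderivWithin ℝ f extRegion) extRegion :=
    hf.fderivWithin isOpen_extRegion.uniqueDiffOn (by norm_num)
  have h2 : DifferentiableAt ℝ (fderivWithin ℝ f extRegion) x :=
    ((h1.differentiableOn (by norm_num)).differentiableAt
      (isOpen_extRegion.mem_nhds hx))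
  exact h2.clm_apply (differentiableAt_const _)

lemma diffAt_pd (hf : ContDiffOn ℝ 2 f extRegion) (hx : x ∈ extRegion) :
    DifferentiableAt ℝ (pd f i) x :=
  (Filter.EventuallyEq.differentiableAt_iff (pd_eventuallyEq hx)).2
    (diffAt_fderivWithin_apply hf hx)

lemma abs_pd_le (hx : x ∈ extRegion) :
    |pd f i x| ≤ ‖iteratedFDerivWithin ℝ 1 f extRegion x‖ := by
  have h : pd f i x = iteratedFDerivWithin ℝ 1 f extRegion x ![ev i] := by
    rw [iteratedFDerivWithin_one_apply (isOpen_extRegion.uniqueDiffOn x hx)]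
    unfold pd
    rw [fderivWithin_of_isOpen isOpen_extRegion hx]
    simp
  rw [h]
  calc ‖iteratedFDerivWithin ℝ 1 f extRegion x ![ev i]‖
      ≤ ‖iteratedFDerivWithin ℝ 1 f extRegion x‖ * ∏ k : Fin 1, ‖(![ev i] : Fin 1 → E3) k‖ :=
        (iteratedFDerivWithin ℝ 1 f extRegion x).le_opNorm _
    _ = ‖iteratedFDerivWithin ℝ 1 f extRegion x‖ := by simp [norm_ev]

lemma pd_pd_eq (hf : ContDiffOn ℝ 2 f extRegion) (hx : x ∈ extRegion) :
    pd (pd f j) i x =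
      fderivWithin ℝ (fderivWithin ℝ f extRegion) extRegion x (ev i) (ev j) := by
  have hd : DifferentiableAt ℝ (fderivWithin ℝ f extRegion) x := by
    have h1 : ContDiffOn ℝ 1 (fderivWithin ℝ f extRegion) extRegion :=
      hf.fderivWithin isOpen_extRegion.uniqueDiffOn (by norm_num)
    exact (h1.differentiableOn (by norm_num)).differentiableAt (isOpen_extRegion.mem_nhds hx)
  have h1 : pd (pd f j) i x = fderiv ℝ (fun y => fderivWithin ℝ f extRegion y (ev j)) x (ev i) := by
    show fderiv ℝ (pd f j) x (ev i) = _
    rw [(pd_eventuallyEq hx).fderiv_eq]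
  rw [h1, fderiv_clm_apply hd (differentiableAt_const _)]
  simp [fderivWithin_of_isOpen isOpen_extRegion hx]

lemma abs_pd_pd_le (hf : ContDiffOn ℝ 2 f extRegion) (hx : x ∈ extRegion) :
    |pd (pd f j) i x| ≤ ‖iteratedFDerivWithin ℝ 2 f extRegion x‖ := by
  have h : pd (pd f j) i x = iteratedFDerivWithin ℝ 2 f extRegion x ![ev i, ev j] := by
    rw [iteratedFDerivWithin_two_apply f isOpen_extRegion.uniqueDiffOn hx]
    rw [pd_pd_eq hf hx]
    simp
  rw [h]
  calc ‖iteratedFDerivWithin ℝ 2 f extRegion x ![ev i, ev j]‖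
      ≤ ‖iteratedFDerivWithin ℝ 2 f extRegion x‖ * ∏ k : Fin 2, ‖(![ev i, ev j] : Fin 2 → E3) k‖ :=
        (iteratedFDerivWithin ℝ 2 f extRegion x).le_opNorm _
    _ = ‖iteratedFDerivWithin ℝ 2 f extRegion x‖ := by
        rw [Fin.prod_univ_two]; simp [norm_ev]

end Aux2

lemma abs_sum3_le {f : Fin 3 → ℝ} {B : ℝ} (h : ∀ k, |f k| ≤ B) : |∑ k, f k| ≤ 3 * B := by
  calc |∑ k, f k| ≤ ∑ k, |f k| := Finset.abs_sum_le_sum_abs _ _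
    _ ≤ ∑ _k : Fin 3, B := Finset.sum_le_sum (fun k _ => h k)
    _ = 3 * B := by simp [Finset.sum_const]

lemma tri3 (p q r : ℝ) : |p + q - r| ≤ |p| + |q| + |r| := by
  have h1 := abs_add_le p q
  calc |p + q - r| ≤ |p + q| + |r| := abs_sub _ _
    _ ≤ |p| + |q| + |r| := by linarith

lemma row_bound (F : Fin 3 → Fin 3 → ℝ) (K ε : ℝ) (hK : 0 ≤ K) (hε : 0 ≤ ε) (hε' : ε ≤ 1 / 100)
    (h : ∀ k l, |F k l| ≤ K + ε * ∑ m, |F k m|) : ∀ k l, |F k l| ≤ 2 * K := by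
  have hne : (Finset.univ : Finset (Fin 3 × Fin 3)).Nonempty := ⟨(0, 0), Finset.mem_univ _⟩
  set M := Finset.univ.sup' hne (fun p : Fin 3 × Fin 3 => |F p.1 p.2|) with hM
  obtain ⟨p, -, hp⟩ := Finset.exists_mem_eq_sup' hne (fun p : Fin 3 × Fin 3 => |F p.1 p.2|)
  have hle : ∀ k l, |F k l| ≤ M := fun k l =>
    Finset.le_sup' (fun p : Fin 3 × Fin 3 => |F p.1 p.2|) (Finset.mem_univ (k, l))
  have hM0 : 0 ≤ M := le_trans (abs_nonneg _) (hle 0 0)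
  have hsum : ∑ m, |F p.1 m| ≤ 3 * M := by
    calc ∑ m, |F p.1 m| ≤ ∑ _m : Fin 3, M := Finset.sum_le_sum (fun m _ => hle _ _)
      _ = 3 * M := by simp [Finset.sum_const]
  have hMK : M ≤ K + ε * (3 * M) := by
    calc M = |F p.1 p.2| := hp
      _ ≤ K + ε * ∑ m, |F p.1 m| := h _ _
      _ ≤ K + ε * (3 * M) := by nlinarith
  have hM2K : M ≤ 2 * K := by nlinarith
  exact fun k l => le_trans (hle k l) hM2K

lemma bnd_mul {a b A B : ℝ} (ha : |a| ≤ A) (hb : |b| ≤ B) : |a * b| ≤ A * B := by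
  rw [abs_mul]; exact mul_le_mul ha hb (abs_nonneg _) (le_trans (abs_nonneg _) ha)

lemma det_one_add_half (s : Matrix (Fin 3) (Fin 3) ℝ) (h : ∀ i j, |s i j| ≤ 1 / 100) :
    (1 / 2 : ℝ) ≤ ((1 : Matrix (Fin 3) (Fin 3) ℝ) + s).det := by
  rw [Matrix.det_fin_three]
  simp only [Matrix.add_apply, Matrix.one_apply]
  norm_num [Fin.ext_iff]
  linarith [abs_le.1 (h 0 0), abs_le.1 (h 1 1), abs_le.1 (h 2 2),
    abs_le.1 (bnd_mul (h 0 0) (h 1 1)), abs_le.1 (bnd_mul (h 0 0) (h 2 2)),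
    abs_le.1 (bnd_mul (h 1 1) (h 2 2)), abs_le.1 (bnd_mul (bnd_mul (h 0 0) (h 1 1)) (h 2 2)),
    abs_le.1 (bnd_mul (h 1 2) (h 2 1)), abs_le.1 (bnd_mul (bnd_mul (h 0 0) (h 1 2)) (h 2 1)),
    abs_le.1 (bnd_mul (h 0 1) (h 1 0)), abs_le.1 (bnd_mul (bnd_mul (h 0 1) (h 1 0)) (h 2 2)),
    abs_le.1 (bnd_mul (bnd_mul (h 0 1) (h 1 2)) (h 2 0)),
    abs_le.1 (bnd_mul (bnd_mul (h 0 2) (h 1 0)) (h 2 1)),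
    abs_le.1 (bnd_mul (h 0 2) (h 2 0)), abs_le.1 (bnd_mul (bnd_mul (h 0 2) (h 1 1)) (h 2 0))]

lemma posdef_one_add (s : Matrix (Fin 3) (Fin 3) ℝ) (hs : s.IsSymm)
    (h : ∀ i j, |s i j| ≤ 1 / 100) : ((1 : Matrix (Fin 3) (Fin 3) ℝ) + s).PosDef := by
  rw [Matrix.posDef_iff_dotProduct_mulVec]
  constructor
  · rw [Matrix.IsHermitian, Matrix.conjTranspose_eq_transpose_of_trivial]
    exact Matrix.isSymm_one.add hs
  · intro v hv
    have hvne : ∃ i, v i ≠ 0 := by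
      by_contra hcon
      push_neg at hcon
      exact hv (funext hcon)
    have hpos : 0 < v 0 ^ 2 + v 1 ^ 2 + v 2 ^ 2 := by
      obtain ⟨i, hi⟩ := hvne
      have := sq_nonneg (v 0); have := sq_nonneg (v 1); have := sq_nonneg (v 2)
      have h2 : 0 < v i ^ 2 := by positivity
      fin_cases i <;> simp_all <;> linarith
    have key : ∀ i j : Fin 3, -(1/100 * (v i ^ 2 + v j ^ 2) / 2) ≤ s i j * v i * v j := by
      intro i j
      have h1 := abs_le.1 (h i j)
      nlinarith [sq_nonneg (v i + v j), sq_nonneg (v i - v j), sq_nonneg (v i), sq_nonneg (v j)]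
    simp only [star_trivial, dotProduct, Matrix.mulVec, Matrix.add_apply,
      Matrix.one_apply, Fin.sum_univ_three]
    norm_num [Fin.ext_iff]
    nlinarith [key 0 0, key 0 1, key 0 2, key 1 0, key 1 1, key 1 2, key 2 0, key 2 1, key 2 2]
open Filter Topology

def af (σ : E3 → Matrix (Fin 3) (Fin 3) ℝ) (k l : Fin 3) (y : E3) : ℝ :=
  ((gmat σ y).det)⁻¹ * (gmat σ y).adjugate k l

lemma inv_entry_eq_af (σ : E3 → Matrix (Fin 3) (Fin 3) ℝ) (k l : Fin 3) (y : E3) :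
    (gmat σ y)⁻¹ k l = af σ k l y := by
  rw [Matrix.inv_def, Ring.inverse_eq_inv]
  simp [af, Matrix.smul_apply, smul_eq_mul]

def Tf (σ : E3 → Matrix (Fin 3) (Fin 3) ℝ) (l i j : Fin 3) (y : E3) : ℝ :=
  pd (fun z => σ z j l) i y + pd (fun z => σ z i l) j y - pd (fun z => σ z i j) l y

lemma gmat_entry (σ : E3 → Matrix (Fin 3) (Fin 3) ℝ) (i j : Fin 3) :
    (fun y => gmat σ y i j) = fun y => (1 : Matrix (Fin 3) (Fin 3) ℝ) i j + σ y i j := by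
  funext y; simp [gmat, Matrix.add_apply]

lemma pd_gmat (σ : E3 → Matrix (Fin 3) (Fin 3) ℝ) (i j k : Fin 3) (y : E3) :
    pd (fun z => gmat σ z i j) k y = pd (fun z => σ z i j) k y := by
  rw [gmat_entry]
  unfold pd
  rw [fderiv_const_add]

lemma Gam_eq (σ : E3 → Matrix (Fin 3) (Fin 3) ℝ) (k i j : Fin 3) (y : E3) :
    Gam σ k i j y = (1 / 2) * ∑ l, af σ k l y * Tf σ l i j y := by
  unfold Gam Tf
  congr 1
  refine Finset.sum_congr rfl fun l _ => ?_
  rw [inv_entry_eq_af, pd_gmat, pd_gmat, pd_gmat]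
open Filter Topology

lemma diffAt_gmat_entry {σ : E3 → Matrix (Fin 3) (Fin 3) ℝ} {y : E3}
    (hd : ∀ i j, DifferentiableAt ℝ (fun z => σ z i j) y) (i j : Fin 3) :
    DifferentiableAt ℝ (fun z => gmat σ z i j) y := by
  rw [gmat_entry]; exact (differentiableAt_const _).add (hd i j)

lemma diffAt_det {σ : E3 → Matrix (Fin 3) (Fin 3) ℝ} {y : E3}
    (hd : ∀ i j, DifferentiableAt ℝ (fun z => σ z i j) y) :
    DifferentiableAt ℝ (fun z => (gmat σ z).det) y := by
  have he := diffAt_gmat_entry hd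
  have h : (fun z => (gmat σ z).det) = fun z =>
      gmat σ z 0 0 * gmat σ z 1 1 * gmat σ z 2 2 -
        gmat σ z 0 0 * gmat σ z 1 2 * gmat σ z 2 1 -
        gmat σ z 0 1 * gmat σ z 1 0 * gmat σ z 2 2 +
        gmat σ z 0 1 * gmat σ z 1 2 * gmat σ z 2 0 +
        gmat σ z 0 2 * gmat σ z 1 0 * gmat σ z 2 1 -
        gmat σ z 0 2 * gmat σ z 1 1 * gmat σ z 2 0 := by
    funext z; rw [Matrix.det_fin_three]
  rw [h]
  exact ((((((he 0 0).mul (he 1 1)).mul (he 2 2)).sub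
    (((he 0 0).mul (he 1 2)).mul (he 2 1))).sub
    (((he 0 1).mul (he 1 0)).mul (he 2 2))).add
    (((he 0 1).mul (he 1 2)).mul (he 2 0))).add
    (((he 0 2).mul (he 1 0)).mul (he 2 1)) |>.sub
    (((he 0 2).mul (he 1 1)).mul (he 2 0))

lemma diffAt_adj {σ : E3 → Matrix (Fin 3) (Fin 3) ℝ} {y : E3}
    (hd : ∀ i j, DifferentiableAt ℝ (fun z => σ z i j) y) (k l : Fin 3) :
    DifferentiableAt ℝ (fun z => (gmat σ z).adjugate k l) y := by
  have he := diffAt_gmat_entry hd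
  fin_cases k <;> fin_cases l <;>
    simp only [Matrix.adjugate_fin_three, Matrix.cons_val', Matrix.cons_val_zero,
      Matrix.cons_val_one, Matrix.head_cons, Matrix.empty_val', Matrix.cons_val_fin_one,
      Matrix.head_fin_const] <;>
    first
      | exact ((he _ _).mul (he _ _)).sub ((he _ _).mul (he _ _))
      | exact (((he _ _).mul (he _ _)).neg).add ((he _ _).mul (he _ _))
lemma diffAt_af {σ : E3 → Matrix (Fin 3) (Fin 3) ℝ} {y : E3}
    (hd : ∀ i j, DifferentiableAt ℝ (fun z => σ z i j) y)
    (hdet : (gmat σ y).det ≠ 0) (k l : Fin 3) :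
    DifferentiableAt ℝ (af σ k l) y := by
  unfold af
  exact ((diffAt_det hd).inv hdet).mul (diffAt_adj hd k l)

lemma af_identity {σ : E3 → Matrix (Fin 3) (Fin 3) ℝ} {y : E3}
    (hdet : IsUnit (gmat σ y).det) (k l : Fin 3) :
    af σ k l y = (if k = l then (1 : ℝ) else 0) - ∑ m, af σ k m y * σ y m l := by
  have h1 : (gmat σ y)⁻¹ * gmat σ y = 1 := Matrix.nonsing_inv_mul _ hdet
  have h2 : (gmat σ y)⁻¹ = 1 - (gmat σ y)⁻¹ * σ y := by
    have h3 : (gmat σ y)⁻¹ * gmat σ y = (gmat σ y)⁻¹ + (gmat σ y)⁻¹ * σ y := by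
      show (gmat σ y)⁻¹ * (1 + σ y) = _
      rw [Matrix.mul_add, Matrix.mul_one]
    rw [h3] at h1
    exact eq_sub_of_add_eq h1
  have h4 : (gmat σ y)⁻¹ k l = ((1 : Matrix (Fin 3) (Fin 3) ℝ) - (gmat σ y)⁻¹ * σ y) k l := by
    rw [← h2]
  rw [inv_entry_eq_af] at h4
  rw [h4, Matrix.sub_apply, Matrix.one_apply, Matrix.mul_apply]
  congr 1
  exact Finset.sum_congr rfl fun m _ => by rw [inv_entry_eq_af]

end AuxLemmas


/-- Expansion of the scalar curvature (Lemma F.3):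
`R[g] = div div σ − Δ tr σ + O(|x|^{−2−2τ})` for `g = Id + σ` asymptotically flat of rate `τ`. -/
theorem scalar_curvature_expansion
    (τ : ℝ) (hτ : τ ∈ Set.Ioc (1 / 2 : ℝ) 1)
    (σ : E3 → Matrix (Fin 3) (Fin 3) ℝ)
    (hsym : ∀ x, (σ x).IsSymm)
    (hreg : ∀ i j, ContDiffOn ℝ 2 (fun x => σ x i j) extRegion)
    (C : ℝ) (hC : 0 < C)
    (hbd : ∀ k : ℕ, k ≤ 2 → ∀ i j, ∀ x ∈ extRegion,
      ‖iteratedFDerivWithin ℝ k (fun y => σ y i j) extRegion x‖ ≤ C * ‖x‖ ^ (-τ - (k : ℝ))) :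
    ∃ C' > (0 : ℝ), ∃ r₀ : ℝ, ∀ x : E3, r₀ < ‖x‖ →
      (gmat σ x).PosDef ∧
      |scalCurv σ x - (divdivS σ x - lap (trS σ) x)| ≤ C' * ‖x‖ ^ (-2 - 2 * τ) := by
  obtain ⟨hτ1, hτ2⟩ := hτ
  have hτ0 : (0:ℝ) < τ := lt_trans (by norm_num) hτ1
  have hUo := isOpen_extRegion
  have hUu : UniqueDiffOn ℝ extRegion := hUo.uniqueDiffOn
  have hr0pos : (0:ℝ) < (100*C) ^ (1/τ) := Real.rpow_pos_of_pos (by positivity) _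
  -- facts valid for every point beyond r₀
  have hbig : ∀ y : E3, 1 + (100*C)^(1/τ) < ‖y‖ →
      (1:ℝ) < ‖y‖ ∧ y ∈ extRegion ∧ C * ‖y‖ ^ (-τ) ≤ 1/100 := by
    intro y hy
    have h1 : (1:ℝ) < ‖y‖ := by linarith
    refine ⟨h1, by simp only [extRegion, Set.mem_setOf_eq]; linarith, ?_⟩
    have hyp : (100*C) ^ (1/τ) ≤ ‖y‖ := by linarith
    have h2 : ((100*C)^(1/τ))^τ ≤ ‖y‖ ^ τ :=
      Real.rpow_le_rpow (le_of_lt hr0pos) hyp (le_of_lt hτ0)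
    rw [← Real.rpow_mul (by positivity), one_div, inv_mul_cancel₀ (ne_of_gt hτ0),
      Real.rpow_one] at h2
    have hyτpos : (0:ℝ) < ‖y‖ ^ τ := Real.rpow_pos_of_pos (by linarith) τ
    rw [Real.rpow_neg (by positivity)]
    rw [mul_inv_le_iff₀ hyτpos]
    linarith
  -- small entries everywhere on the exterior region
  have hsy : ∀ y ∈ extRegion, ∀ i j, |σ y i j| ≤ C * ‖y‖ ^ (-τ) := by
    intro y hy i j
    have := hbd 0 (by norm_num) i j y hy
    rw [norm_iteratedFDerivWithin_zero] at this
    simpa using this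
  have hdiffσ : ∀ y ∈ extRegion, ∀ i j, DifferentiableAt ℝ (fun z => σ z i j) y :=
    fun y hy i j => ((hreg i j).differentiableOn (by norm_num)).differentiableAt
      (hUo.mem_nhds hy)
  -- the set V beyond r₀
  have hVo : IsOpen {y : E3 | 1 + (100*C)^(1/τ) < ‖y‖} :=
    isOpen_lt continuous_const continuous_norm
  have hdetV : ∀ y, 1 + (100*C)^(1/τ) < ‖y‖ → (1/2 : ℝ) ≤ (gmat σ y).det := by
    intro y hy
    obtain ⟨h1, h2, h3⟩ := hbig y hy
    exact det_one_add_half (σ y) (fun i j => le_trans (hsy y h2 i j) h3)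
  have hdetne : ∀ y, 1 + (100*C)^(1/τ) < ‖y‖ → (gmat σ y).det ≠ 0 := by
    intro y hy
    have := hdetV y hy
    linarith
  have hdiffaf : ∀ y, 1 + (100*C)^(1/τ) < ‖y‖ → ∀ k l, DifferentiableAt ℝ (af σ k l) y := by
    intro y hy k l
    exact diffAt_af (hdiffσ y (hbig y hy).2.1) (hdetne y hy) k l
  have hidV : ∀ y, 1 + (100*C)^(1/τ) < ‖y‖ → ∀ k l,
      af σ k l y = (if k = l then (1:ℝ) else 0) - ∑ m, af σ k m y * σ y m l := by
    intro y hy k l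
    exact af_identity (isUnit_iff_ne_zero.2 (hdetne y hy)) k l
  refine ⟨10000 * C^2, by positivity, 1 + (100*C)^(1/τ), ?_⟩
  intro x hx
  obtain ⟨hx1, hxU, hxsmall⟩ := hbig x hx
  have hRpos : (0:ℝ) < ‖x‖ := by linarith
  set ε : ℝ := C * ‖x‖ ^ (-τ) with hεdef
  set D1 : ℝ := C * ‖x‖ ^ (-τ - 1) with hD1def
  set D2 : ℝ := C * ‖x‖ ^ (-τ - 2) with hD2def
  set Q : ℝ := C^2 * ‖x‖ ^ (-2 - 2*τ) with hQdef
  have hε0 : 0 ≤ ε := by positivity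
  have hD10 : 0 ≤ D1 := by positivity
  have hD20 : 0 ≤ D2 := by positivity
  have hQ0 : 0 ≤ Q := by positivity
  have hε : ε ≤ 1/100 := hxsmall
  have hQ1 : D1 * D1 = Q := by
    rw [hD1def, hQdef]
    rw [show C * ‖x‖ ^ (-τ - 1) * (C * ‖x‖ ^ (-τ - 1)) =
      C^2 * (‖x‖ ^ (-τ - 1) * ‖x‖ ^ (-τ - 1)) by ring]
    rw [← Real.rpow_add hRpos, show (-τ - 1) + (-τ - 1) = -2 - 2*τ by ring]
  have hQ2 : ε * D2 = Q := by
    rw [hεdef, hD2def, hQdef]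
    rw [show C * ‖x‖ ^ (-τ) * (C * ‖x‖ ^ (-τ - 2)) =
      C^2 * (‖x‖ ^ (-τ) * ‖x‖ ^ (-τ - 2)) by ring]
    rw [← Real.rpow_add hRpos, show (-τ) + (-τ - 2) = -2 - 2*τ by ring]
  -- pointwise bounds at x
  have hs0 : ∀ i j, |σ x i j| ≤ ε := fun i j => hsy x hxU i j
  have hd1 : ∀ k i j, |pd (fun y => σ y i j) k x| ≤ D1 := by
    intro k i j
    refine le_trans (abs_pd_le hxU) (le_trans (hbd 1 (by norm_num) i j x hxU) ?_)
    norm_num [hD1def]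
  have hd2 : ∀ k l i j, |pd (pd (fun y => σ y i j) l) k x| ≤ D2 := by
    intro k l i j
    refine le_trans (abs_pd_pd_le (hreg i j) hxU) (le_trans (hbd 2 (by norm_num) i j x hxU) ?_)
    norm_num [hD2def]
  -- bounds on the inverse metric entries
  have hafbound : ∀ k l, |af σ k l x| ≤ 1 + ε * ∑ m, |af σ k m x| := by
    intro k l
    rw [hidV x hx k l]
    have h1 : |∑ m, af σ k m x * σ x m l| ≤ ε * ∑ m, |af σ k m x| := by
      calc |∑ m, af σ k m x * σ x m l| ≤ ∑ m, |af σ k m x * σ x m l| :=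
            Finset.abs_sum_le_sum_abs _ _
        _ ≤ ∑ m, |af σ k m x| * ε := Finset.sum_le_sum (fun m _ => by
            rw [abs_mul]; exact mul_le_mul_of_nonneg_left (hs0 m l) (abs_nonneg _))
        _ = ε * ∑ m, |af σ k m x| := by rw [← Finset.sum_mul]; ring
    calc |(if k = l then (1:ℝ) else 0) - ∑ m, af σ k m x * σ x m l|
        ≤ |(if k = l then (1:ℝ) else 0)| + |∑ m, af σ k m x * σ x m l| := abs_sub _ _
      _ ≤ 1 + ε * ∑ m, |af σ k m x| := add_le_add (by split <;> simp) h1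
  have haf2 : ∀ k l, |af σ k l x| ≤ 2 := by
    have := row_bound (fun k l => af σ k l x) 1 ε (by norm_num) hε0 hε hafbound
    simpa using this
  have hb : ∀ k l, |af σ k l x - (if k = l then (1:ℝ) else 0)| ≤ 6 * ε := by
    intro k l
    rw [hidV x hx k l]
    rw [show (if k = l then (1:ℝ) else 0) - (∑ m, af σ k m x * σ x m l)
      - (if k = l then (1:ℝ) else 0) = -(∑ m, af σ k m x * σ x m l) by ring, abs_neg]
    calc |∑ m, af σ k m x * σ x m l| ≤ 3 * (2 * ε) :=
          abs_sum3_le (fun m => bnd_mul (haf2 k m) (hs0 m l))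
      _ = 6 * ε := by ring
  -- derivative of the inverse entries
  have hpdaf_eq : ∀ n k l, pd (af σ k l) n x =
      -∑ m, (af σ k m x * pd (fun z => σ z m l) n x + σ x m l * pd (af σ k m) n x) := by
    intro n k l
    have hcongr : pd (af σ k l) n x =
        pd (fun y => (if k = l then (1:ℝ) else 0) - ∑ m, af σ k m y * σ y m l) n x :=
      pd_congr_open hVo hx (fun y hy => hidV y hy k l)
    rw [hcongr, pd_const_sub]
    rw [pd_sum Finset.univ (fun m y => af σ k m y * σ y m l)
      (fun m _ => (hdiffaf x hx k m).mul (hdiffσ x hxU m l))]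
    congr 1
    exact Finset.sum_congr rfl fun m _ =>
      pd_mul (hdiffaf x hx k m) (hdiffσ x hxU m l)
  have hpdaf : ∀ n k l, |pd (af σ k l) n x| ≤ 12 * D1 := by
    intro n
    have hgen : ∀ k l, |pd (af σ k l) n x| ≤ 6 * D1 + ε * ∑ m, |pd (af σ k m) n x| := by
      intro k l
      rw [hpdaf_eq n k l, abs_neg]
      calc |∑ m, (af σ k m x * pd (fun z => σ z m l) n x + σ x m l * pd (af σ k m) n x)|
          ≤ ∑ m, |af σ k m x * pd (fun z => σ z m l) n x + σ x m l * pd (af σ k m) n x| :=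
            Finset.abs_sum_le_sum_abs _ _
        _ ≤ ∑ m, (2 * D1 + ε * |pd (af σ k m) n x|) := Finset.sum_le_sum (fun m _ => by
            refine le_trans (abs_add_le _ _) (add_le_add (bnd_mul (haf2 k m) (hd1 n m l)) ?_)
            rw [abs_mul]
            exact mul_le_mul_of_nonneg_right (hs0 m l) (abs_nonneg _))
        _ = 6 * D1 + ε * ∑ m, |pd (af σ k m) n x| := by
            rw [Finset.sum_add_distrib, Finset.sum_const, Finset.card_univ, Finset.mul_sum]
            norm_num
            ring
    have := row_bound (fun k l => pd (af σ k l) n x) (6 * D1) ε (by positivity) hε0 hε hgen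
    intro k l
    have h2 := this k l
    linarith
  -- bounds on T and its derivatives
  have hT : ∀ l i j, |Tf σ l i j x| ≤ 3 * D1 := by
    intro l i j
    have := tri3 (pd (fun z => σ z j l) i x) (pd (fun z => σ z i l) j x)
      (pd (fun z => σ z i j) l x)
    have e : Tf σ l i j x = pd (fun z => σ z j l) i x + pd (fun z => σ z i l) j x
        - pd (fun z => σ z i j) l x := rfl
    rw [e]
    have b1 := hd1 i j l; have b2 := hd1 j i l; have b3 := hd1 l i j
    linarith
  have hdiffT : ∀ l i j, ∀ y ∈ extRegion, DifferentiableAt ℝ (Tf σ l i j) y := by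
    intro l i j y hy
    have e : Tf σ l i j = fun y => pd (fun z => σ z j l) i y + pd (fun z => σ z i l) j y
        - pd (fun z => σ z i j) l y := rfl
    rw [e]
    exact ((diffAt_pd (hreg j l) hy).add (diffAt_pd (hreg i l) hy)).sub
      (diffAt_pd (hreg i j) hy)
  have hpdT_eq : ∀ m l i j, pd (Tf σ l i j) m x =
      pd (pd (fun z => σ z j l) i) m x + pd (pd (fun z => σ z i l) j) m x
        - pd (pd (fun z => σ z i j) l) m x := by
    intro m l i j
    have e : Tf σ l i j = fun y => (pd (fun z => σ z j l) i y + pd (fun z => σ z i l) j y)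
        - pd (fun z => σ z i j) l y := rfl
    rw [e, pd_sub (f := fun y => pd (fun z => σ z j l) i y + pd (fun z => σ z i l) j y)
      ((diffAt_pd (hreg j l) hxU).add (diffAt_pd (hreg i l) hxU))
      (diffAt_pd (hreg i j) hxU),
      pd_add (diffAt_pd (hreg j l) hxU) (diffAt_pd (hreg i l) hxU)]
  have hpdT : ∀ m l i j, |pd (Tf σ l i j) m x| ≤ 3 * D2 := by
    intro m l i j
    rw [hpdT_eq m l i j]
    have := tri3 (pd (pd (fun z => σ z j l) i) m x) (pd (pd (fun z => σ z i l) j) m x)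
      (pd (pd (fun z => σ z i j) l) m x)
    have b1 := hd2 m i j l; have b2 := hd2 m j i l; have b3 := hd2 m l i j
    linarith
  -- Christoffel bounds
  have hGamv : ∀ k i j, |Gam σ k i j x| ≤ 9 * D1 := by
    intro k i j
    rw [Gam_eq, abs_mul]
    calc |(1/2 : ℝ)| * |∑ l, af σ k l x * Tf σ l i j x|
        ≤ (1/2) * (3 * (2 * (3 * D1))) := by
          rw [show |(1/2 : ℝ)| = 1/2 by norm_num]
          refine mul_le_mul_of_nonneg_left (abs_sum3_le (fun l => ?_)) (by norm_num)
          exact le_trans (bnd_mul (haf2 k l) (hT l i j)) (by linarith)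
      _ = 9 * D1 := by ring
  have hdiffsum : DifferentiableAt ℝ
      (fun y : E3 => (0:ℝ)) x := differentiableAt_const _
  -- derivative of Christoffel
  have hpdGam_eq : ∀ m k i j, pd (fun y => Gam σ k i j y) m x =
      (1/2) * ∑ l, (af σ k l x * pd (Tf σ l i j) m x + Tf σ l i j x * pd (af σ k l) m x) := by
    intro m k i j
    have e : (fun y => Gam σ k i j y) =
        fun y => (1/2 : ℝ) * ∑ l, af σ k l y * Tf σ l i j y := funext fun y => Gam_eq σ k i j y
    rw [e, pd_const_mul _ (DifferentiableAt.fun_sum (A := fun l y => af σ k l y * Tf σ l i j y) (fun l _ =>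
      (hdiffaf x hx k l).mul (hdiffT l i j x hxU)))]
    congr 1
    rw [pd_sum Finset.univ (fun l y => af σ k l y * Tf σ l i j y)
      (fun l _ => (hdiffaf x hx k l).mul (hdiffT l i j x hxU))]
    exact Finset.sum_congr rfl fun l _ => pd_mul (hdiffaf x hx k l) (hdiffT l i j x hxU)
  have hdelta : ∀ m k i j, ∑ l, ((if k = l then (1:ℝ) else 0) * pd (Tf σ l i j) m x)
      = pd (Tf σ k i j) m x := by
    intro m k i j
    simp only [ite_mul, one_mul, zero_mul]
    rw [Finset.sum_ite_eq]
    simp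
  have hpdGam_err : ∀ m k i j,
      |pd (fun y => Gam σ k i j y) m x - (1/2) * pd (Tf σ k i j) m x| ≤ 100 * Q := by
    intro m k i j
    rw [hpdGam_eq m k i j]
    have split : ∑ l, (af σ k l x * pd (Tf σ l i j) m x + Tf σ l i j x * pd (af σ k l) m x)
        = (∑ l, ((af σ k l x - (if k = l then (1:ℝ) else 0)) * pd (Tf σ l i j) m x
             + Tf σ l i j x * pd (af σ k l) m x)) + pd (Tf σ k i j) m x := by
      rw [← hdelta m k i j, ← Finset.sum_add_distrib]
      exact Finset.sum_congr rfl fun l _ => by ring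
    rw [split]
    rw [show (1/2 : ℝ) * ((∑ l, ((af σ k l x - (if k = l then (1:ℝ) else 0))
        * pd (Tf σ l i j) m x + Tf σ l i j x * pd (af σ k l) m x)) + pd (Tf σ k i j) m x)
        - (1/2) * pd (Tf σ k i j) m x
        = (1/2) * ∑ l, ((af σ k l x - (if k = l then (1:ℝ) else 0)) * pd (Tf σ l i j) m x
             + Tf σ l i j x * pd (af σ k l) m x) from by ring]
    rw [abs_mul, show |(1/2:ℝ)| = 1/2 by norm_num]
    have e1 : 6 * ε * (3 * D2) = 18 * Q := by rw [← hQ2]; ring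
    have e2 : 3 * D1 * (12 * D1) = 36 * Q := by rw [← hQ1]; ring
    have hEb : |∑ l, ((af σ k l x - (if k = l then (1:ℝ) else 0)) * pd (Tf σ l i j) m x
        + Tf σ l i j x * pd (af σ k l) m x)| ≤ 3 * (54 * Q) := by
      refine abs_sum3_le (fun l => ?_)
      have b1 := bnd_mul (hb k l) (hpdT m l i j)
      have b2 := bnd_mul (hT l i j) (hpdaf m k l)
      refine le_trans (abs_add_le _ _) ?_
      linarith
    linarith
  -- Ricci estimates
  have hmainT : ∀ i j, |(1/2 : ℝ) * ∑ k, (pd (Tf σ k i j) k x - pd (Tf σ k k j) i x)| ≤ 9 * D2 := by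
    intro i j
    rw [abs_mul, show |(1/2:ℝ)| = 1/2 by norm_num]
    have h1 : |∑ k, (pd (Tf σ k i j) k x - pd (Tf σ k k j) i x)| ≤ 3 * (6 * D2) :=
      abs_sum3_le (fun k => le_trans (abs_sub _ _)
        (by have := hpdT k k i j; have := hpdT i k k j; linarith))
    linarith
  have hRic_err : ∀ i j, |Ricci σ i j x
      - (1/2) * ∑ k, (pd (Tf σ k i j) k x - pd (Tf σ k k j) i x)| ≤ 2100 * Q := by
    intro i j
    have hdecomp : Ricci σ i j x - (1/2) * ∑ k, (pd (Tf σ k i j) k x - pd (Tf σ k k j) i x)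
        = (∑ k, ((pd (fun y => Gam σ k i j y) k x - (1/2) * pd (Tf σ k i j) k x)
            - (pd (fun y => Gam σ k k j y) i x - (1/2) * pd (Tf σ k k j) i x)))
          + ∑ k, ∑ l, (Gam σ k k l x * Gam σ l i j x - Gam σ k i l x * Gam σ l k j x) := by
      simp only [Ricci, Fin.sum_univ_three]
      ring
    rw [hdecomp]
    have e3 : 9 * D1 * (9 * D1) = 81 * Q := by rw [← hQ1]; ring
    have hX : |∑ k, ((pd (fun y => Gam σ k i j y) k x - (1/2) * pd (Tf σ k i j) k x)
        - (pd (fun y => Gam σ k k j y) i x - (1/2) * pd (Tf σ k k j) i x))| ≤ 3 * (200 * Q) :=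
      abs_sum3_le (fun k => le_trans (abs_sub _ _)
        (by have := hpdGam_err k k i j; have := hpdGam_err i k k j; linarith))
    have hG : |∑ k, ∑ l, (Gam σ k k l x * Gam σ l i j x - Gam σ k i l x * Gam σ l k j x)|
        ≤ 3 * (3 * (162 * Q)) := by
      refine abs_sum3_le (fun k => ?_)
      refine abs_sum3_le (fun l => ?_)
      refine le_trans (abs_sub _ _) ?_
      have b1 := bnd_mul (hGamv k k l) (hGamv l i j)
      have b2 := bnd_mul (hGamv k i l) (hGamv l k j)
      linarith
    refine le_trans (abs_add_le _ _) ?_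
    linarith
  have hRic_bd : ∀ i j, |Ricci σ i j x| ≤ 9 * D2 + 2100 * Q := by
    intro i j
    have h1 := hRic_err i j
    have h2 := hmainT i j
    calc |Ricci σ i j x| = |(Ricci σ i j x
          - (1/2) * ∑ k, (pd (Tf σ k i j) k x - pd (Tf σ k k j) i x))
          + (1/2) * ∑ k, (pd (Tf σ k i j) k x - pd (Tf σ k k j) i x)| := by ring_nf
      _ ≤ 9 * D2 + 2100 * Q := le_trans (abs_add_le _ _) (by linarith)
  -- the main term identity
  have h1 : ∀ i k : Fin 3, pd (Tf σ k i i) k x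
      = 2 * pd (pd (fun z => σ z i k) i) k x - pd (pd (fun z => σ z i i) k) k x := by
    intro i k
    have e : Tf σ k i i = fun y => (pd (fun z => σ z i k) i y + pd (fun z => σ z i k) i y)
        - pd (fun z => σ z i i) k y := rfl
    rw [e, pd_sub (f := fun y => pd (fun z => σ z i k) i y + pd (fun z => σ z i k) i y)
      ((diffAt_pd (hreg i k) hxU).add (diffAt_pd (hreg i k) hxU))
      (diffAt_pd (hreg i i) hxU),
      pd_add (diffAt_pd (hreg i k) hxU) (diffAt_pd (hreg i k) hxU)]
    ring
  have h2 : ∀ i k : Fin 3, pd (Tf σ k k i) i x = pd (pd (fun z => σ z k k) i) i x := by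
    intro i k
    have hswap : (fun z => σ z k i) = fun z => σ z i k := funext fun z => (hsym z).apply i k
    have e : Tf σ k k i = fun y => pd (fun z => σ z i k) k y + pd (fun z => σ z k k) i y
        - pd (fun z => σ z k i) k y := rfl
    have e2 : Tf σ k k i = fun y => pd (fun z => σ z k k) i y := by
      rw [e, hswap]
      funext y
      ring
    rw [e2]
  have e3 : divdivS σ x = ∑ j, ∑ i, pd (pd (fun z => σ z i j) i) j x := by
    refine Finset.sum_congr rfl fun j _ => ?_
    have e : divS σ j = fun y => ∑ i, pd (fun z => σ z i j) i y := rfl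
    rw [e, pd_sum Finset.univ (fun i y => pd (fun z => σ z i j) i y)
      (fun i _ => diffAt_pd (hreg i j) hxU)]
  have e4 : lap (trS σ) x = ∑ i, ∑ k, pd (pd (fun z => σ z k k) i) i x := by
    refine Finset.sum_congr rfl fun i _ => ?_
    have h5 : ∀ y ∈ extRegion, pd (trS σ) i y = ∑ k, pd (fun z => σ z k k) i y := by
      intro y hy
      have etrS : trS σ = fun w => ∑ k, σ w k k := by
        funext w; simp [trS, Matrix.trace, Matrix.diag]
      rw [etrS, pd_sum Finset.univ (fun k w => σ w k k) (fun k _ => hdiffσ y hy k k)]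
    have h6 : pd (pd (trS σ) i) i x = pd (fun y => ∑ k, pd (fun z => σ z k k) i y) i x :=
      pd_congr_open hUo hxU (fun y hy => h5 y hy)
    rw [h6, pd_sum Finset.univ (fun k y => pd (fun z => σ z k k) i y)
      (fun k _ => diffAt_pd (hreg k k) hxU)]
  have key : ∑ i, (1/2 : ℝ) * ∑ k, (pd (Tf σ k i i) k x - pd (Tf σ k k i) i x)
      = divdivS σ x - lap (trS σ) x := by
    rw [e3, e4]
    simp only [h1, h2, Fin.sum_univ_three]
    ring
  -- scalar curvature decomposition
  have hscal : scalCurv σ x - (divdivS σ x - lap (trS σ) x)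
      = (∑ i, ∑ j, ((af σ i j x - (if i = j then (1:ℝ) else 0)) * Ricci σ i j x))
        + ∑ i, (Ricci σ i i x
            - (1/2) * ∑ k, (pd (Tf σ k i i) k x - pd (Tf σ k k i) i x)) := by
    rw [← key]
    simp only [scalCurv, inv_entry_eq_af, Fin.sum_univ_three]
    norm_num [Fin.ext_iff]
    ring
  -- final estimate
  have hbB : |∑ i, ∑ j, ((af σ i j x - (if i = j then (1:ℝ) else 0)) * Ricci σ i j x)|
      ≤ 1700 * Q := by
    have hper : ∀ i j : Fin 3, |(af σ i j x - (if i = j then (1:ℝ) else 0)) * Ricci σ i j x|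
        ≤ 6 * ε * (9 * D2 + 2100 * Q) := fun i j => bnd_mul (hb i j) (hRic_bd i j)
    have houter : |∑ i, ∑ j, ((af σ i j x - (if i = j then (1:ℝ) else 0)) * Ricci σ i j x)|
        ≤ 3 * (3 * (6 * ε * (9 * D2 + 2100 * Q))) :=
      abs_sum3_le (fun i => abs_sum3_le (fun j => hper i j))
    have hc1 : (9:ℝ) * (6 * ε * (9 * D2 + 2100 * Q)) = 486 * (ε * D2) + 113400 * (ε * Q) := by
      ring
    have hc2 : ε * Q ≤ (1/100) * Q := mul_le_mul_of_nonneg_right hε hQ0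
    have hc3 : 486 * (ε * D2) = 486 * Q := by rw [hQ2]
    nlinarith
  have hdiag : |∑ i, (Ricci σ i i x
      - (1/2) * ∑ k, (pd (Tf σ k i i) k x - pd (Tf σ k k i) i x))| ≤ 3 * (2100 * Q) :=
    abs_sum3_le (fun i => hRic_err i i)
  refine ⟨posdef_one_add (σ x) (hsym x) (fun i j => le_trans (hs0 i j) hε), ?_⟩
  calc |scalCurv σ x - (divdivS σ x - lap (trS σ) x)|
      ≤ 1700 * Q + 3 * (2100 * Q) := by
        rw [hscal]
        exact le_trans (abs_add_le _ _) (add_le_add hbB hdiag)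
    _ ≤ 10000 * Q := by linarith
    _ = 10000 * C^2 * ‖x‖ ^ (-2 - 2*τ) := by rw [hQdef]; ring
end
end
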